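/- Let $n \geq 3$, $q \geq 3$ be integers and $m = \lceil (n-1)/q \rceil$. Then $2qn - n - 2qmn - q^2 m + q^2 m^2 \leq n - 2mn - m + m^2$. -/
import Mathlib

/-- Let n ≥ 3, q ≥ 3 be integers and m = ⌈(n-1)/q⌉. Then
2qn - n - 2qmn - q²m + q²m² ≤ n - 2mn - m + m². -/
theorem key_inequality_d4 (n q m : ℤ) (hn : 3 ≤ n) (hq : 3 ≤ q)
    (hm : m = ⌈((n : ℚ) - 1) / (q : ℚ)⌉) :
    2 * q * n - n - 2 * q * m * n - q ^ 2 * m + q ^ 2 * m ^ 2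
      ≤ n - 2 * m * n - m + m ^ 2 := by
  have hq0 : (0 : ℚ) < (q : ℚ) := by exact_mod_cast (by linarith : (0:ℤ) < q)
  have hm1 : 1 ≤ m := by
    rw [hm]
    refine Int.ceil_pos.mpr (div_pos ?_ hq0)
    have : (3 : ℚ) ≤ (n : ℚ) := by exact_mod_cast hn
    linarith
  have h1 : q * m ≤ n - 2 + q := by
    have h := Int.ceil_lt_add_one (((n : ℚ) - 1) / (q : ℚ))
    rw [← hm] at h
    have h2 : ((m : ℚ) - 1) * q < (n : ℚ) - 1 :=
      (lt_div_iff₀ hq0).mp (by linarith : ((m : ℚ) - 1) < ((n : ℚ) - 1) / (q : ℚ))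
    have h3 : (m - 1) * q < n - 1 := by exact_mod_cast h2
    linarith
  rcases eq_or_lt_of_le hm1 with h|h
  · subst h; ring_nf; nlinarith
  · have hm2 : 2 ≤ m := h
    have hC : 2 ≤ 2 * n - (q + 1) * m := by
      nlinarith [mul_nonneg (by linarith : (0:ℤ) ≤ q - 1) (by linarith : (0:ℤ) ≤ m - 2)]
    nlinarith [mul_nonneg (mul_nonneg (by linarith : (0:ℤ) ≤ q - 1)
      (by linarith : (0:ℤ) ≤ m - 1)) (by linarith : (0:ℤ) ≤ 2 * n - (q + 1) * m)]
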